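/- Let A be a nonzero polynomial in finitely many commuting variables v_i^{(j)} (1 ≤ i ≤ N, j ≥ 0) all of whose monomials have total degree ≥ 2, and let ∂ₓ be the derivation with ∂ₓ v_i^{(j)} = v_i^{(j+1)}. Then the expression C := Σ_{i,k=1}^{N} Σ_{j,l≥0} (∂²A/∂v_i^{(j)}∂v_k^{(l)}) v_{i+1}^{(j+1)} v_{k+1}^{(l+1)} - Σ_{k=1}^{N} Σ_{l≥0} ∂ₓ(∂A/∂v_k^{(l)}) v_{k+2}^{(l+1)} is nonzero. (Here indices i+1, k+1, k+2 range over new variables as needed.) -/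
import Mathlib

open MvPolynomial

/-- The polynomial ring `ℂ[v_i^{(j)}]` in commuting variables `v_i^{(j)}` indexed by
pairs `(i,j)`. -/
noncomputable abbrev VRing : Type := MvPolynomial (ℕ × ℕ) ℂ

/-- The variable `v_i^{(j)}`. -/
noncomputable def vv (i j : ℕ) : VRing := X (i, j)

/-- The derivation `∂ₓ` with `∂ₓ v_i^{(j)} = v_i^{(j+1)}`. -/
noncomputable def Dv : Derivation ℂ VRing VRing :=
  MvPolynomial.mkDerivation ℂ (fun p : ℕ × ℕ => X (p.1, p.2 + 1))

/-- The total degree of a monomial. -/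
def mdeg (m : (ℕ × ℕ) →₀ ℕ) : ℕ := ∑ x ∈ m.support, m x

theorem pderiv_X_if (c d : ℕ × ℕ) : (pderiv c (X d : VRing)) = if d = c then 1 else 0 := by
  by_cases h : d = c <;> simp [h, pderiv_X_self, pderiv_X_of_ne]

theorem pderiv_swap (a b : ℕ × ℕ) (f : VRing) :
    pderiv a (pderiv b f) = pderiv b (pderiv a f) := by
  have h : (⁅(pderiv a : Derivation ℂ VRing VRing), pderiv b⁆ : Derivation ℂ VRing VRing) = 0 := by
    apply derivation_ext
    intro i
    simp only [Derivation.commutator_apply, Derivation.zero_apply, pderiv_X_if]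
    split_ifs <;> simp
  have := congrFun (congrArg (fun D : Derivation ℂ VRing VRing => (D : VRing → VRing)) h) f
  simpa [Derivation.commutator_apply, sub_eq_zero] using this

theorem pderiv_Dv (a b : ℕ) (f : VRing) :
    pderiv (a, b+1) (Dv f) = Dv (pderiv (a, b+1) f) + pderiv (a, b) f := by
  have h : (⁅(pderiv ((a, b+1) : ℕ × ℕ) : Derivation ℂ VRing VRing), Dv⁆ :
      Derivation ℂ VRing VRing) = pderiv (a, b) := by
    apply derivation_ext
    intro i
    simp only [Derivation.commutator_apply, Dv, mkDerivation_X, pderiv_X_if]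
    have hiff : ((i.1, i.2 + 1) = (a, b+1)) ↔ (i = (a, b)) := by
      cases i; simp [Prod.ext_iff]
    rw [if_congr hiff rfl rfl]
    split_ifs <;> simp
  have := congrFun (congrArg (fun D : Derivation ℂ VRing VRing => (D : VRing → VRing)) h) f
  simp only [Derivation.commutator_apply] at this
  linear_combination this

theorem coeff_pderiv' (p : ℕ × ℕ) (f : VRing) (n : (ℕ × ℕ) →₀ ℕ) :
    coeff n (pderiv p f) = ∑ m ∈ f.support,
      if m - Finsupp.single p 1 = n then coeff m f * (m p : ℂ) else 0 := by
  conv_lhs => rw [f.as_sum, map_sum]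
  rw [coeff_sum]
  refine Finset.sum_congr rfl fun m _ => ?_
  rw [pderiv_monomial, coeff_monomial]

theorem pderiv_ne_zero_of_mem_vars {p : ℕ × ℕ} {f : VRing} (h : p ∈ f.vars) :
    pderiv p f ≠ 0 := by
  rw [mem_vars] at h
  obtain ⟨m₀, hm₀, hpm₀⟩ := h
  rw [Finsupp.mem_support_iff] at hpm₀
  have hle : Finsupp.single p 1 ≤ m₀ := by
    rw [Finsupp.single_le_iff]; omega
  intro hz
  have hc := coeff_pderiv' p f (m₀ - Finsupp.single p 1)
  rw [hz, coeff_zero] at hc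
  rw [Finset.sum_eq_single m₀] at hc
  · rw [if_pos rfl] at hc
    have : coeff m₀ f ≠ 0 := mem_support_iff.mp hm₀
    have : (m₀ p : ℂ) ≠ 0 := Nat.cast_ne_zero.mpr hpm₀
    simp_all [mul_eq_zero]
  · intro m hm hne
    rw [ite_eq_right_iff]
    intro heq
    have : m p = 0 := by
      by_contra hmp
      have hle' : Finsupp.single p 1 ≤ m := by rw [Finsupp.single_le_iff]; omega
      have h1 := tsub_add_cancel_of_le hle
      have h2 := tsub_add_cancel_of_le hle'
      exact hne (by rw [← h2, heq, h1])
    simp [this]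
  · intro hm; exact absurd hm₀ hm

theorem mdeg_single (p : ℕ × ℕ) (k : ℕ) : mdeg (Finsupp.single p k) = k := by
  rcases eq_or_ne k 0 with rfl | hk
  · simp [mdeg]
  · rw [mdeg, Finsupp.support_single_ne_zero _ hk]; simp

theorem support_pderiv_ne_zero {p : ℕ × ℕ} {f : VRing}
    (hdeg : ∀ m ∈ f.support, 2 ≤ mdeg m) {n : (ℕ × ℕ) →₀ ℕ}
    (hn : n ∈ (pderiv p f).support) : n ≠ 0 := by
  rintro rfl
  have hc := mem_support_iff.mp hn
  rw [coeff_pderiv' p f 0] at hc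
  obtain ⟨m, hm, hne⟩ := Finset.exists_ne_zero_of_sum_ne_zero hc
  rw [ite_ne_right_iff] at hne
  obtain ⟨heq, hval⟩ := hne
  have hmp : m p ≠ 0 := by
    intro h0; rw [h0] at hval; simp at hval
  have hle : Finsupp.single p 1 ≤ m := by rw [Finsupp.single_le_iff]; omega
  have hle2 : m ≤ Finsupp.single p 1 := tsub_eq_zero_iff_le.mp heq
  have hms : m = Finsupp.single p 1 := le_antisymm hle2 hle
  have hd := hdeg m hm
  rw [hms, mdeg_single] at hd
  omega

theorem Dv_ne_zero {g : VRing} (hvars : g.vars.Nonempty) : Dv g ≠ 0 := by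
  have hJ : (g.vars.image Prod.snd).Nonempty := hvars.image _
  set j₀ := (g.vars.image Prod.snd).max' hJ with hj₀
  obtain ⟨⟨i₀, j₁⟩, hmem, hsnd⟩ := Finset.mem_image.mp ((g.vars.image Prod.snd).max'_mem hJ)
  simp only at hsnd
  subst hsnd
  intro hz
  have hhigh : pderiv (i₀, j₀ + 1) g = 0 := by
    apply pderiv_eq_zero_of_notMem_vars
    intro hm
    have := Finset.le_max' (g.vars.image Prod.snd) (j₀ + 1) (Finset.mem_image_of_mem _ hm)
    omega
  have := pderiv_Dv i₀ j₀ g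
  rw [hz, map_zero, hhigh, map_zero, zero_add] at this
  exact pderiv_ne_zero_of_mem_vars hmem this.symm

/-- Let `A` be a nonzero polynomial in the variables `v_i^{(j)}` (`1 ≤ i ≤ N`) all of whose
monomials have total degree `≥ 2`.  Then
`C := Σ_{i,k=1}^{N} Σ_{j,l≥0} (∂²A/∂v_i^{(j)}∂v_k^{(l)}) v_{i+1}^{(j+1)} v_{k+1}^{(l+1)}
    - Σ_{k=1}^{N} Σ_{l≥0} ∂ₓ(∂A/∂v_k^{(l)}) v_{k+2}^{(l+1)}`
is nonzero. -/
theorem C_expression_nonzero (N : ℕ) (A : VRing) (hA : A ≠ 0)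
    (hsupp : A ∈ MvPolynomial.supported ℂ {p : ℕ × ℕ | 1 ≤ p.1 ∧ p.1 ≤ N})
    (hdeg : ∀ m ∈ A.support, 2 ≤ mdeg m) :
    ((∑ i ∈ Finset.Icc 1 N, ∑ k ∈ Finset.Icc 1 N, ∑ᶠ (j : ℕ), ∑ᶠ (l : ℕ),
        pderiv (i, j) (pderiv (k, l) A) * vv (i + 1) (j + 1) * vv (k + 1) (l + 1)) -
      (∑ k ∈ Finset.Icc 1 N, ∑ᶠ (l : ℕ),
        Dv (pderiv (k, l) A) * vv (k + 2) (l + 1))) ≠ 0 := by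
  intro hC
  -- the variables of A form a nonempty set
  have hvarsA : A.vars.Nonempty := by
    obtain ⟨m, hm⟩ := support_nonempty.mpr hA
    have hd := hdeg m hm
    have hm0 : m ≠ 0 := by rintro rfl; simp [mdeg] at hd
    obtain ⟨x, hx⟩ := Finsupp.support_nonempty_iff.mpr hm0
    exact ⟨x, (mem_vars x).mpr ⟨m, hm, hx⟩⟩
  obtain ⟨k₀, l₀, hmem, hmax⟩ : ∃ k₀ l₀ : ℕ, (k₀, l₀) ∈ A.vars ∧
      ∀ p ∈ A.vars, p.1 ≤ k₀ := by
    have hKne : (A.vars.image Prod.fst).Nonempty := hvarsA.image _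
    obtain ⟨⟨k₁, l₁⟩, hmem, hfst⟩ :=
      Finset.mem_image.mp ((A.vars.image Prod.fst).max'_mem hKne)
    refine ⟨k₁, l₁, hmem, ?_⟩
    intro p hp
    simp only at hfst
    rw [hfst]
    exact Finset.le_max' _ p.1 (Finset.mem_image_of_mem _ hp)
  have hAzero : ∀ a b : ℕ, k₀ < a → pderiv (a, b) A = 0 := by
    intro a b h
    apply pderiv_eq_zero_of_notMem_vars
    intro hm
    have := hmax _ hm
    simp only at this
    omega
  obtain ⟨M, hMlt⟩ : ∃ M : ℕ, ∀ p ∈ A.vars, p.2 < M := by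
    refine ⟨(A.vars.sup Prod.snd) + 1, fun p hp => ?_⟩
    have := Finset.le_sup (f := Prod.snd) hp
    omega
  have hMzero : ∀ k l : ℕ, M ≤ l → pderiv (k, l) A = 0 := by
    intro k l h
    apply pderiv_eq_zero_of_notMem_vars
    intro hm
    have := hMlt _ hm
    simp only at this
    omega
  have hl₀ : l₀ < M := hMlt _ hmem
  have hk₀N : 1 ≤ k₀ ∧ k₀ ≤ N := (mem_supported.mp hsupp) (Finset.mem_coe.mpr hmem)
  have hdzero : ∀ (k l a b : ℕ), k₀ < a → pderiv (a, b) (pderiv (k, l) A) = 0 := by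
    intro k l a b h
    rw [pderiv_swap, hAzero a b h, map_zero]
  -- convert finsums to finite sums
  have hS2eq : ∀ k : ℕ, (∑ᶠ (l : ℕ), Dv (pderiv (k, l) A) * vv (k + 2) (l + 1))
      = ∑ l ∈ Finset.range M, Dv (pderiv (k, l) A) * vv (k + 2) (l + 1) := by
    intro k
    apply finsum_eq_sum_of_support_subset
    intro l hl
    simp only [Function.mem_support] at hl
    simp only [Finset.coe_range, Set.mem_Iio]
    by_contra h
    exact hl (by rw [hMzero k l (by omega), map_zero, zero_mul])
  have hS1l : ∀ i k j : ℕ,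
      (∑ᶠ (l : ℕ), pderiv (i, j) (pderiv (k, l) A) * vv (i + 1) (j + 1) * vv (k + 1) (l + 1))
      = ∑ l ∈ Finset.range M,
          pderiv (i, j) (pderiv (k, l) A) * vv (i + 1) (j + 1) * vv (k + 1) (l + 1) := by
    intro i k j
    apply finsum_eq_sum_of_support_subset
    intro l hl
    simp only [Function.mem_support] at hl
    simp only [Finset.coe_range, Set.mem_Iio]
    by_contra h
    exact hl (by rw [hMzero k l (by omega)]; simp)
  have hS1j : ∀ i k : ℕ,
      (∑ᶠ (j : ℕ), ∑ l ∈ Finset.range M,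
          pderiv (i, j) (pderiv (k, l) A) * vv (i + 1) (j + 1) * vv (k + 1) (l + 1))
      = ∑ j ∈ Finset.range M, ∑ l ∈ Finset.range M,
          pderiv (i, j) (pderiv (k, l) A) * vv (i + 1) (j + 1) * vv (k + 1) (l + 1) := by
    intro i k
    apply finsum_eq_sum_of_support_subset
    intro j hj
    simp only [Function.mem_support] at hj
    simp only [Finset.coe_range, Set.mem_Iio]
    by_contra h
    apply hj
    apply Finset.sum_eq_zero
    intro l _
    rw [pderiv_swap, hMzero i j (by omega), map_zero, zero_mul, zero_mul]
  simp only [hS1l, hS1j, hS2eq] at hC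
  set q : ℕ × ℕ := (k₀ + 2, l₀ + 1) with hq
  have hP := congrArg (pderiv q) hC
  rw [map_zero, map_sub] at hP
  simp only [map_sum] at hP
  -- first sum vanishes
  have hTS1 : ∀ i k j l : ℕ,
      pderiv q (pderiv (i, j) (pderiv (k, l) A) * vv (i + 1) (j + 1) * vv (k + 1) (l + 1))
        = 0 := by
    intro i k j l
    have hc : pderiv q (pderiv (i, j) (pderiv (k, l) A)) = 0 := by
      rw [pderiv_swap, hdzero k l _ _ (by omega), map_zero]
    by_cases h1 : i = k₀ + 1
    · have hc0 : pderiv (i, j) (pderiv (k, l) A) = 0 := by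
        rw [pderiv_swap, h1, hAzero (k₀ + 1) j (by omega), map_zero]
      rw [hc0, zero_mul, zero_mul, map_zero]
    · by_cases h2 : k = k₀ + 1
      · have hc0 : pderiv (i, j) (pderiv (k, l) A) = 0 := by
          rw [h2, hAzero (k₀ + 1) l (by omega), map_zero]
        rw [hc0, zero_mul, zero_mul, map_zero]
      · have hv1 : pderiv q (vv (i + 1) (j + 1)) = 0 := by
          apply pderiv_X_of_ne
          simp only [hq, ne_eq, Prod.mk.injEq, not_and]
          intro h; omega
        have hv2 : pderiv q (vv (k + 1) (l + 1)) = 0 := by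
          apply pderiv_X_of_ne
          simp only [hq, ne_eq, Prod.mk.injEq, not_and]
          intro h; omega
        rw [pderiv_mul, pderiv_mul, hc, hv1, hv2]
        ring
  have hsum1 : (∑ i ∈ Finset.Icc 1 N, ∑ k ∈ Finset.Icc 1 N,
      ∑ j ∈ Finset.range M, ∑ l ∈ Finset.range M,
        pderiv q (pderiv (i, j) (pderiv (k, l) A) * vv (i + 1) (j + 1) * vv (k + 1) (l + 1))) = 0 := by
    apply Finset.sum_eq_zero; intro i _
    apply Finset.sum_eq_zero; intro k _
    apply Finset.sum_eq_zero; intro j _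
    exact Finset.sum_eq_zero fun l _ => hTS1 i k j l
  -- second sum gives the key term
  have hTS2 : ∀ k l : ℕ,
      pderiv q (Dv (pderiv (k, l) A) * vv (k + 2) (l + 1))
        = if k = k₀ ∧ l = l₀ then Dv (pderiv ((k₀ : ℕ), (l₀ : ℕ)) A) else 0 := by
    intro k l
    have hg1 : pderiv q (Dv (pderiv (k, l) A)) = 0 := by
      rw [hq, pderiv_Dv, hdzero k l _ _ (by omega), hdzero k l _ _ (by omega), map_zero, add_zero]
    rw [pderiv_mul, hg1, zero_mul, zero_add]
    by_cases h : k = k₀ ∧ l = l₀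
    · rw [if_pos h, h.1, h.2]
      rw [show vv (k₀ + 2) (l₀ + 1) = X q from rfl, pderiv_X_self, mul_one]
    · rw [if_neg h]
      have : pderiv q (vv (k + 2) (l + 1)) = 0 := by
        apply pderiv_X_of_ne
        simp only [hq, ne_eq, Prod.mk.injEq, not_and]
        intro h1 h2
        exact h ⟨by omega, by omega⟩
      rw [this, mul_zero]
  have hsum2 : (∑ k ∈ Finset.Icc 1 N,
      ∑ l ∈ Finset.range M, pderiv q (Dv (pderiv (k, l) A) * vv (k + 2) (l + 1)))
        = Dv (pderiv ((k₀ : ℕ), (l₀ : ℕ)) A) := by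
    have step : ∀ k : ℕ,
        (∑ l ∈ Finset.range M, pderiv q (Dv (pderiv (k, l) A) * vv (k + 2) (l + 1)))
          = if k = k₀ then Dv (pderiv ((k₀ : ℕ), (l₀ : ℕ)) A) else 0 := by
      intro k
      by_cases hk : k = k₀
      · subst hk
        rw [if_pos rfl, Finset.sum_eq_single l₀]
        · rw [hTS2, if_pos ⟨rfl, rfl⟩]
        · intro l _ hl; rw [hTS2, if_neg (by tauto)]
        · intro hl; exact absurd (Finset.mem_range.mpr hl₀) hl
      · rw [if_neg hk]
        apply Finset.sum_eq_zero
        intro l _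
        rw [hTS2, if_neg (by tauto)]
    rw [Finset.sum_congr rfl fun k _ => step k, Finset.sum_ite_eq']
    rw [if_pos (Finset.mem_Icc.mpr ⟨hk₀N.1, hk₀N.2⟩)]
  rw [hsum1, hsum2, zero_sub, neg_eq_zero] at hP
  -- but this derivative is nonzero
  have hgvars : (pderiv ((k₀ : ℕ), (l₀ : ℕ)) A).vars.Nonempty := by
    have hg : pderiv ((k₀ : ℕ), (l₀ : ℕ)) A ≠ 0 := pderiv_ne_zero_of_mem_vars hmem
    obtain ⟨n, hn⟩ := support_nonempty.mpr hg
    have hn0 : n ≠ 0 := support_pderiv_ne_zero hdeg hn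
    obtain ⟨x, hx⟩ := Finsupp.support_nonempty_iff.mpr hn0
    exact ⟨x, (mem_vars x).mpr ⟨n, hn, hx⟩⟩
  exact Dv_ne_zero hgvars hP
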